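/- If for some ξ ∈ D the left multiplication operator L_ξ : ζ ↦ ξζ is bounded with respect to ‖·‖₊, then the right multiplication operator R_ξ : η ↦ ηξ is bounded with respect to ‖·‖⁻ with the same operator norm: sup{‖ξζ‖₊ : ζ ∈ D, ‖ζ‖₊ ≤ 1} = sup{‖ηξ‖⁻ : η ∈ D, ‖η‖⁻ ≤ 1}. -/

import Mathlib

/-!
Statement 9: in a Tomita-type *-algebra, boundedness of left multiplication
w.r.t. `‖·‖₊` implies boundedness of right multiplication w.r.t. `‖·‖⁻` with
the same operator norm.
-/

noncomputable section

/-- The left Hilbert norm `‖ξ‖₊ = ⟨ξ|ξ⟩₊^{1/2}` associated with a scalar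
product `innp`; the right norm is `‖ξ‖⁻ = ‖ξ⋆‖₊`. -/
def pnorm {D : Type*} (innp : D → D → ℂ) (ξ : D) : ℝ := Real.sqrt (innp ξ ξ).re


section Aux

variable {D : Type*} [AddCommGroup D] [Module ℂ D] (innp : D → D → ℂ)

lemma pnorm_nonneg (x : D) : 0 ≤ pnorm innp x := Real.sqrt_nonneg _

lemma pnorm_sq (h_pos : ∀ x : D, 0 ≤ (innp x x).re) (x : D) :
    pnorm innp x ^ 2 = (innp x x).re := Real.sq_sqrt (h_pos x)

lemma pnorm_smul_real
    (h_smul_left : ∀ (c : ℂ) (x z : D), innp (c • x) z = starRingEnd ℂ c * innp x z)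
    (h_smul_right : ∀ (c : ℂ) (x z : D), innp x (c • z) = c * innp x z)
    (r : ℝ) (x : D) :
    pnorm innp ((r : ℂ) • x) = |r| * pnorm innp x := by
  unfold pnorm
  rw [h_smul_left, h_smul_right]
  have : (starRingEnd ℂ) (r : ℂ) * ((r : ℂ) * innp x x) = ((r ^ 2 : ℝ) : ℂ) * innp x x := by
    simp [Complex.conj_ofReal]; ring
  rw [this, Complex.re_ofReal_mul, Real.sqrt_mul (sq_nonneg r), Real.sqrt_sq_eq_abs]

lemma pnorm_cs
    (h_add_left : ∀ x y z : D, innp (x + y) z = innp x z + innp y z)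
    (h_smul_left : ∀ (c : ℂ) (x z : D), innp (c • x) z = starRingEnd ℂ c * innp x z)
    (h_symm : ∀ x y : D, innp x y = starRingEnd ℂ (innp y x))
    (h_pos : ∀ x : D, 0 ≤ (innp x x).re)
    (x y : D) : ‖innp x y‖ ≤ pnorm innp x * pnorm innp y := by
  letI c : PreInnerProductSpace.Core ℂ D :=
    { inner := innp
      conj_inner_symm := fun a b => (h_symm a b).symm
      re_inner_nonneg := h_pos
      add_left := h_add_left
      smul_left := fun a b r => h_smul_left r a b }
  letI : Inner ℂ D := c.toInner
  have key := InnerProductSpace.Core.inner_mul_inner_self_le (𝕜 := ℂ) (F := D) x y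
  have hsym : ‖(inner ℂ y x : ℂ)‖ = ‖(inner ℂ x y : ℂ)‖ := by
    have : (inner ℂ x y : ℂ) = starRingEnd ℂ (inner ℂ y x) := h_symm x y
    rw [this, RCLike.norm_conj]
  rw [hsym] at key
  have h1 : ‖(inner ℂ x y : ℂ)‖ ^ 2 ≤ (innp x x).re * (innp y y).re := by
    rw [sq]; exact key
  have h2 : ‖innp x y‖ = ‖(inner ℂ x y : ℂ)‖ := rfl
  rw [h2]
  have := Real.sqrt_le_sqrt h1
  rw [Real.sqrt_sq (norm_nonneg _), Real.sqrt_mul (h_pos x)] at this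
  exact this

end Aux

section Adj

variable {D : Type*} [NonUnitalRing D] [Module ℂ D]
    [IsScalarTower ℂ D D] [SMulCommClass ℂ D D] [StarRing D] (innp : D → D → ℂ)

set_option linter.unusedSectionVars false

/-- Adjoint bound: if `L_ξ` is bounded by `C ≥ 0`, so is `L_{ξ⋆}`. -/
lemma adj_bound
    (h_add_left : ∀ x y z : D, innp (x + y) z = innp x z + innp y z)
    (h_smul_left : ∀ (c : ℂ) (x z : D), innp (c • x) z = starRingEnd ℂ c * innp x z)
    (h_symm : ∀ x y : D, innp x y = starRingEnd ℂ (innp y x))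
    (h_pos : ∀ x : D, 0 ≤ (innp x x).re)
    (h_tomita_left : ∀ ξ ζ η : D, innp (star η * ζ) ξ = innp ζ (η * ξ))
    (ξ : D) (C : ℝ) (hC : 0 ≤ C)
    (h : ∀ ζ : D, pnorm innp (ξ * ζ) ≤ C * pnorm innp ζ) :
    ∀ ζ : D, pnorm innp (star ξ * ζ) ≤ C * pnorm innp ζ := by
  intro ζ
  set a := pnorm innp (star ξ * ζ) with ha
  set b := pnorm innp ζ with hb
  have ha0 : 0 ≤ a := pnorm_nonneg innp _
  have hb0 : 0 ≤ b := pnorm_nonneg innp _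
  have hsq : a ^ 2 = (innp (star ξ * ζ) (star ξ * ζ)).re := pnorm_sq innp h_pos _
  have hT : innp (star ξ * ζ) (star ξ * ζ) = innp ζ (ξ * (star ξ * ζ)) :=
    h_tomita_left (star ξ * ζ) ζ ξ
  have hch : a ^ 2 ≤ b * pnorm innp (ξ * (star ξ * ζ)) := by
    rw [hsq, hT]
    calc (innp ζ (ξ * (star ξ * ζ))).re ≤ ‖innp ζ (ξ * (star ξ * ζ))‖ :=
          Complex.re_le_norm _
      _ ≤ pnorm innp ζ * pnorm innp (ξ * (star ξ * ζ)) :=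
          pnorm_cs innp h_add_left h_smul_left h_symm h_pos _ _
  have hfin : a ^ 2 ≤ b * (C * a) := by
    refine hch.trans (mul_le_mul_of_nonneg_left (h _) hb0)
  rcases eq_or_lt_of_le ha0 with h0 | h0
  · rw [← h0]; positivity
  · nlinarith

/-- If `T` commutes with real scalars and its values on the unit ball lie in a
set `S`, then `sSup S` bounds `T`. -/
lemma sup_bound
    (h_smul_left : ∀ (c : ℂ) (x z : D), innp (c • x) z = starRingEnd ℂ c * innp x z)
    (h_smul_right : ∀ (c : ℂ) (x z : D), innp x (c • z) = c * innp x z)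
    (T : D → D) (hT : ∀ (r : ℝ) (x : D), T ((r : ℂ) • x) = (r : ℂ) • T x)
    (S : Set ℝ) (hmem : ∀ ζ : D, pnorm innp ζ ≤ 1 → pnorm innp (T ζ) ∈ S)
    (hbdd : BddAbove S)
    (hzero : ∀ ζ : D, pnorm innp ζ = 0 → pnorm innp (T ζ) = 0) :
    ∀ ζ : D, pnorm innp (T ζ) ≤ sSup S * pnorm innp ζ := by
  have pz : pnorm innp (0 : D) = 0 := by
    have := pnorm_smul_real innp h_smul_left h_smul_right 0 (0 : D)
    simpa using this
  have hS0 : 0 ≤ sSup S := by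
    have h0 : (0 : ℝ) ∈ S := by
      have hm := hmem 0 (by rw [pz]; norm_num)
      rwa [hzero 0 pz] at hm
    exact le_csSup hbdd h0
  intro ζ
  by_cases hz : pnorm innp ζ = 0
  · rw [hzero ζ hz, hz, mul_zero]
  · have ht : 0 < pnorm innp ζ := lt_of_le_of_ne (pnorm_nonneg innp ζ) (Ne.symm hz)
    set t := pnorm innp ζ with htd
    have h1 : pnorm innp (((t⁻¹ : ℝ) : ℂ) • ζ) ≤ 1 := by
      rw [pnorm_smul_real innp h_smul_left h_smul_right, abs_of_nonneg (by positivity),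
        inv_mul_cancel₀ (ne_of_gt ht)]
    have hm := le_csSup hbdd (hmem _ h1)
    rw [hT, pnorm_smul_real innp h_smul_left h_smul_right,
      abs_of_nonneg (by positivity : (0:ℝ) ≤ t⁻¹)] at hm
    calc pnorm innp (T ζ) = t * (t⁻¹ * pnorm innp (T ζ)) := by
          field_simp
      _ ≤ t * sSup S := by
          exact mul_le_mul_of_nonneg_left hm (le_of_lt ht)
      _ = sSup S * t := mul_comm _ _

end Adj

/-- If left multiplication `L_ξ : ζ ↦ ξζ` is bounded w.r.t.
`‖·‖₊`, then right multiplication `R_ξ : η ↦ ηξ` is bounded w.r.t.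
`‖·‖⁻ = ‖(·)⋆‖₊`, with the same operator norm. -/
theorem tomita_left_bounded_iff_right_bounded
    (D : Type*) [NonUnitalRing D] [Module ℂ D]
    [IsScalarTower ℂ D D] [SMulCommClass ℂ D D] [StarRing D] [StarModule ℂ D]
    (innp : D → D → ℂ)
    (h_add_left : ∀ x y z : D, innp (x + y) z = innp x z + innp y z)
    (h_add_right : ∀ x y z : D, innp x (y + z) = innp x y + innp x z)
    (h_smul_left : ∀ (c : ℂ) (x z : D), innp (c • x) z = starRingEnd ℂ c * innp x z)
    (h_smul_right : ∀ (c : ℂ) (x z : D), innp x (c • z) = c * innp x z)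
    (h_symm : ∀ x y : D, innp x y = starRingEnd ℂ (innp y x))
    (h_pos : ∀ x : D, 0 ≤ (innp x x).re)
    (h_def : ∀ x : D, innp x x = 0 → x = 0)
    (h_tomita_left : ∀ ξ ζ η : D, innp (star η * ζ) ξ = innp ζ (η * ξ))
    (h_tomita_right : ∀ ξ ζ η : D,
      innp (star ξ) (star (η * star ζ)) = innp (star (ξ * ζ)) (star η))
    (ξ : D)
    (hbdd : ∃ C : ℝ, ∀ ζ : D, pnorm innp (ξ * ζ) ≤ C * pnorm innp ζ) :
    (∃ C : ℝ, ∀ η : D, pnorm innp (star (η * ξ)) ≤ C * pnorm innp (star η)) ∧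
    sSup {r : ℝ | ∃ ζ : D, pnorm innp ζ ≤ 1 ∧ r = pnorm innp (ξ * ζ)}
      = sSup {r : ℝ | ∃ η : D, pnorm innp (star η) ≤ 1 ∧ r = pnorm innp (star (η * ξ))} := by
  obtain ⟨C, hC⟩ := hbdd
  have pz : pnorm innp (0 : D) = 0 := by
    have := pnorm_smul_real innp h_smul_left h_smul_right 0 (0 : D)
    simpa using this
  set S₁ : Set ℝ := {r : ℝ | ∃ ζ : D, pnorm innp ζ ≤ 1 ∧ r = pnorm innp (ξ * ζ)} with hS₁def
  set S₂ : Set ℝ :=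
    {r : ℝ | ∃ η : D, pnorm innp (star η) ≤ 1 ∧ r = pnorm innp (star (η * ξ))} with hS₂def
  have h01 : (0 : ℝ) ∈ S₁ := ⟨0, by rw [pz]; norm_num, by rw [mul_zero, pz]⟩
  have h02 : (0 : ℝ) ∈ S₂ :=
    ⟨0, by rw [star_zero, pz]; norm_num, by rw [zero_mul, star_zero, pz]⟩
  have hS1bdd : BddAbove S₁ := by
    refine ⟨max C 0, ?_⟩
    rintro r ⟨ζ, hζ, rfl⟩
    calc pnorm innp (ξ * ζ) ≤ C * pnorm innp ζ := hC ζ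
      _ ≤ max C 0 * pnorm innp ζ :=
          mul_le_mul_of_nonneg_right (le_max_left _ _) (pnorm_nonneg innp ζ)
      _ ≤ max C 0 * 1 := mul_le_mul_of_nonneg_left hζ (le_max_right _ _)
      _ = max C 0 := mul_one _
  have hzero₁ : ∀ ζ : D, pnorm innp ζ = 0 → pnorm innp (ξ * ζ) = 0 := by
    intro ζ h
    have := hC ζ
    rw [h, mul_zero] at this
    exact le_antisymm this (pnorm_nonneg innp _)
  have hbound : ∀ ζ : D, pnorm innp (ξ * ζ) ≤ sSup S₁ * pnorm innp ζ :=
    sup_bound innp h_smul_left h_smul_right (fun ζ => ξ * ζ)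
      (fun r x => mul_smul_comm _ _ _) S₁ (fun ζ h => ⟨ζ, h, rfl⟩) hS1bdd hzero₁
  have hN₁0 : 0 ≤ sSup S₁ := le_csSup hS1bdd h01
  have hadj : ∀ ζ : D, pnorm innp (star ξ * ζ) ≤ sSup S₁ * pnorm innp ζ :=
    adj_bound innp h_add_left h_smul_left h_symm h_pos h_tomita_left ξ (sSup S₁) hN₁0 hbound
  constructor
  · exact ⟨sSup S₁, fun η => by rw [star_mul]; exact hadj (star η)⟩
  · have hS2ub : ∀ r ∈ S₂, r ≤ sSup S₁ := by
      rintro r ⟨η, hη, rfl⟩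
      rw [star_mul]
      calc pnorm innp (star ξ * star η) ≤ sSup S₁ * pnorm innp (star η) := hadj (star η)
        _ ≤ sSup S₁ * 1 := mul_le_mul_of_nonneg_left hη hN₁0
        _ = sSup S₁ := mul_one _
    have hS2bdd : BddAbove S₂ := ⟨sSup S₁, hS2ub⟩
    have hle₂ : sSup S₂ ≤ sSup S₁ := csSup_le ⟨0, h02⟩ hS2ub
    have hzero₂ : ∀ ζ : D, pnorm innp ζ = 0 → pnorm innp (star ξ * ζ) = 0 := by
      intro ζ h
      have := hadj ζ
      rw [h, mul_zero] at this
      exact le_antisymm this (pnorm_nonneg innp _)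
    have hmem₂ : ∀ ζ : D, pnorm innp ζ ≤ 1 → pnorm innp (star ξ * ζ) ∈ S₂ := by
      intro ζ h
      exact ⟨star ζ, by rwa [star_star], by rw [star_mul, star_star]⟩
    have hbound₂ : ∀ ζ : D, pnorm innp (star ξ * ζ) ≤ sSup S₂ * pnorm innp ζ :=
      sup_bound innp h_smul_left h_smul_right (fun ζ => star ξ * ζ)
        (fun r x => mul_smul_comm _ _ _) S₂ hmem₂ hS2bdd hzero₂
    have hN₂0 : 0 ≤ sSup S₂ := le_csSup hS2bdd h02
    have hadj₂ : ∀ ζ : D, pnorm innp (ξ * ζ) ≤ sSup S₂ * pnorm innp ζ := by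
      have := adj_bound innp h_add_left h_smul_left h_symm h_pos h_tomita_left (star ξ)
        (sSup S₂) hN₂0 hbound₂
      simpa [star_star] using this
    have hle₁ : sSup S₁ ≤ sSup S₂ := by
      refine csSup_le ⟨0, h01⟩ ?_
      rintro r ⟨ζ, hζ, rfl⟩
      calc pnorm innp (ξ * ζ) ≤ sSup S₂ * pnorm innp ζ := hadj₂ ζ
        _ ≤ sSup S₂ * 1 := mul_le_mul_of_nonneg_left hζ hN₂0
        _ = sSup S₂ := mul_one _
    exact le_antisymm hle₁ hle₂

end
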